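/- Correctness of the multiple-choice knapsack DP with cardinality bound: define B*(w, j, n) for w ∈ {0,…,W}, j ∈ {0,…,R}, n ∈ {0,…,N} by B*(0, j, n) = 0, B*(w, 0, n) = ∞ for w > 0, and B*(w, j, n) = min( min_{a ∈ 𝒜_j} (β_{ja} + B*(max(0, w − q_{ja}), j−1, n−1)), B*(w, j−1, min(j−1, n)) ). Then B*(W, R, N) equals the minimum of ∑_{(j,a) selected} β_{ja} over all selections z with z_{ja} ∈ {0,1}, ∑_a z_{ja} ≤ 1 for each j, total cardinality ∑ z_{ja} ≤ N, and knapsack constraint ∑ q_{ja} z_{ja} ≥ W (with the convention that the minimum over the empty set is ∞). -/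

import Mathlib

open Finset

section Aux

variable (𝒜 : ℕ → Finset ℕ) (q : ℕ → ℕ → ℕ) (β : ℕ → ℕ → NNReal)

def Feas (w j n : ℕ) (Sel : Finset (ℕ × ℕ)) : Prop :=
  (∀ p ∈ Sel, 1 ≤ p.1 ∧ p.1 ≤ j ∧ p.2 ∈ 𝒜 p.1) ∧
  (∀ p ∈ Sel, ∀ p' ∈ Sel, p.1 = p'.1 → p = p') ∧
  Sel.card ≤ n ∧ w ≤ ∑ p ∈ Sel, q p.1 p.2

noncomputable def S (w j n : ℕ) : ENNReal :=
  sInf {v | ∃ Sel, Feas 𝒜 q w j n Sel ∧ v = ∑ p ∈ Sel, (β p.1 p.2 : ENNReal)}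

lemma S_zero (j n : ℕ) : S 𝒜 q β 0 j n = 0 := by
  refine le_antisymm (sInf_le ?_) (by simp)
  exact ⟨∅, ⟨by simp, by simp, by simp, by simp⟩, by simp⟩

lemma S_top_j (w n : ℕ) (hw : 0 < w) : S 𝒜 q β w 0 n = ⊤ := by
  have h : {v | ∃ Sel, Feas 𝒜 q w 0 n Sel ∧ v = ∑ p ∈ Sel, (β p.1 p.2 : ENNReal)} = ∅ := by
    refine Set.eq_empty_iff_forall_notMem.2 ?_
    rintro v ⟨Sel, ⟨h1, _, _, h4⟩, rfl⟩
    have hS : Sel = ∅ := by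
      by_contra h
      obtain ⟨p, hp⟩ := Finset.nonempty_iff_ne_empty.2 h
      have := h1 p hp; omega
    subst hS; simp at h4; omega
  rw [S, h, sInf_empty]

lemma S_top_n (w j : ℕ) (hw : 0 < w) : S 𝒜 q β w j 0 = ⊤ := by
  have h : {v | ∃ Sel, Feas 𝒜 q w j 0 Sel ∧ v = ∑ p ∈ Sel, (β p.1 p.2 : ENNReal)} = ∅ := by
    refine Set.eq_empty_iff_forall_notMem.2 ?_
    rintro v ⟨Sel, ⟨_, _, h3, h4⟩, rfl⟩
    have hS : Sel = ∅ := Finset.card_eq_zero.1 (Nat.le_zero.1 h3)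
    subst hS; simp at h4; omega
  rw [S, h, sInf_empty]

lemma card_le_of_feas {j' : ℕ} {Sel : Finset (ℕ × ℕ)}
    (h1 : ∀ p ∈ Sel, 1 ≤ p.1 ∧ p.1 ≤ j')
    (h2 : ∀ p ∈ Sel, ∀ p' ∈ Sel, p.1 = p'.1 → p = p') :
    Sel.card ≤ j' := by
  have := Finset.card_le_card_of_injOn (t := Finset.Icc 1 j') Prod.fst
    (fun p hp => Finset.mem_Icc.2 ⟨(h1 p hp).1, (h1 p hp).2⟩)
    (fun p hp p' hp' hpp' => h2 p hp p' hp' hpp')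
  simpa using this

lemma S_rec (w j n : ℕ) (hw : 0 < w) (hj : 1 ≤ j) (hn : 1 ≤ n) :
    S 𝒜 q β w j n = min
      ((𝒜 j).inf fun a => (β j a : ENNReal) + S 𝒜 q β (w - q j a) (j - 1) (n - 1))
      (S 𝒜 q β w (j - 1) (min (j - 1) n)) := by
  refine le_antisymm (le_min ?_ ?_) ?_
  · -- S ≤ inf over a
    refine Finset.le_inf fun a ha => ?_
    conv_rhs => rw [S, sInf_eq_iInf']
    rw [ENNReal.add_iInf]
    refine le_iInf ?_
    rintro ⟨v, Sel, ⟨h1, h2, h3, h4⟩, rfl⟩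
    have hnot : (j, a) ∉ Sel := fun hmem => by
      have := (h1 _ hmem).2.1; simp at this; omega
    refine sInf_le ⟨insert (j, a) Sel, ⟨?_, ?_, ?_, ?_⟩, ?_⟩
    · rintro p hp
      rcases Finset.mem_insert.1 hp with rfl | hp
      · exact ⟨hj, le_rfl, ha⟩
      · have := h1 p hp; exact ⟨this.1, by omega, this.2.2⟩
    · rintro p hp p' hp' hpp'
      rcases Finset.mem_insert.1 hp with rfl | hp <;>
        rcases Finset.mem_insert.1 hp' with rfl | hp'
      · rfl
      · have := (h1 p' hp').2.1; simp at hpp'; omega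
      · have := (h1 p hp).2.1; simp at hpp'; omega
      · exact h2 p hp p' hp' hpp'
    · have := Finset.card_insert_le (j, a) Sel; omega
    · rw [Finset.sum_insert hnot]; simp only; omega
    · rw [Finset.sum_insert hnot]
  · -- S ≤ skip
    refine sInf_le_sInf ?_
    rintro v ⟨Sel, ⟨h1, h2, h3, h4⟩, rfl⟩
    refine ⟨Sel, ⟨?_, h2, by omega, h4⟩, rfl⟩
    intro p hp; have := h1 p hp; exact ⟨this.1, by omega, this.2.2⟩
  · -- min ≤ S
    refine le_sInf ?_
    rintro v ⟨Sel, ⟨h1, h2, h3, h4⟩, rfl⟩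
    by_cases hex : ∃ a, (j, a) ∈ Sel
    · obtain ⟨a, ha⟩ := hex
      have ha𝒜 : a ∈ 𝒜 j := (h1 _ ha).2.2
      refine le_trans (min_le_left _ _) (le_trans (Finset.inf_le ha𝒜) ?_)
      have hfeas : Feas 𝒜 q (w - q j a) (j - 1) (n - 1) (Sel.erase (j, a)) := by
        refine ⟨?_, ?_, ?_, ?_⟩
        · intro p hp
          obtain ⟨hne, hpS⟩ := Finset.mem_erase.1 hp
          have h1p := h1 p hpS
          have : p.1 ≠ j := fun hpj => hne (h2 p hpS (j, a) ha hpj)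
          exact ⟨h1p.1, by omega, h1p.2.2⟩
        · intro p hp p' hp' hpp'
          exact h2 p (Finset.mem_erase.1 hp).2 p' (Finset.mem_erase.1 hp').2 hpp'
        · rw [Finset.card_erase_of_mem ha]; omega
        · have := Finset.add_sum_erase Sel (fun p => q p.1 p.2) ha
          simp only at this; omega
      have hle : S 𝒜 q β (w - q j a) (j - 1) (n - 1) ≤
          ∑ p ∈ Sel.erase (j, a), (β p.1 p.2 : ENNReal) := by
        rw [S]; exact sInf_le ⟨_, hfeas, rfl⟩
      calc (β j a : ENNReal) + S 𝒜 q β (w - q j a) (j - 1) (n - 1)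
          ≤ (β j a : ENNReal) + ∑ p ∈ Sel.erase (j, a), (β p.1 p.2 : ENNReal) :=
            by gcongr
        _ = ∑ p ∈ Sel, (β p.1 p.2 : ENNReal) :=
            Finset.add_sum_erase Sel (fun p => (β p.1 p.2 : ENNReal)) ha
    · refine le_trans (min_le_right _ _) (sInf_le ⟨Sel, ⟨?_, h2, ?_, h4⟩, rfl⟩)
      · intro p hp
        have h1p := h1 p hp
        have : p.1 ≠ j := by
          intro hpj; exact hex ⟨p.2, by rwa [← hpj, Prod.mk.eta]⟩
        exact ⟨h1p.1, by omega, h1p.2.2⟩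
      · have hc : Sel.card ≤ j - 1 := by
          refine card_le_of_feas (j' := j - 1) ?_ h2
          intro p hp
          have h1p := h1 p hp
          have : p.1 ≠ j := by
            intro hpj; exact hex ⟨p.2, by rwa [← hpj, Prod.mk.eta]⟩
          omega
        omega

end Aux

/-- Correctness of the multiple-choice knapsack DP with cardinality bound used
to solve the pricing problem PP⁽ⁱ⁾: B*(W,R,N) equals the minimum total dual
cost ∑ β over all selections of at most N (content, AoI) pairs, at most one AoI
per content, whose total profit ∑ q reaches the threshold W (minimum over the
empty set being ⊤). -/
theorem stmt_12 (W R N : ℕ) (𝒜 : ℕ → Finset ℕ) (q : ℕ → ℕ → ℕ) (β : ℕ → ℕ → NNReal)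
    (B : ℕ → ℕ → ℕ → ENNReal)
    (hB0 : ∀ j n, B 0 j n = 0)
    (hBw0 : ∀ w n, 0 < w → B w 0 n = ⊤)
    (hBn0 : ∀ w j, 0 < w → B w j 0 = ⊤)
    (hrec : ∀ w j n, 0 < w → w ≤ W → 1 ≤ j → j ≤ R → 1 ≤ n → n ≤ N →
      B w j n = min
        ((𝒜 j).inf (fun a => (β j a : ENNReal) + B (w - q j a) (j - 1) (n - 1)))
        (B w (j - 1) (min (j - 1) n))) :
    B W R N = sInf {v : ENNReal | ∃ Sel : Finset (ℕ × ℕ),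
      (∀ p ∈ Sel, 1 ≤ p.1 ∧ p.1 ≤ R ∧ p.2 ∈ 𝒜 p.1) ∧
      (∀ p ∈ Sel, ∀ p' ∈ Sel, p.1 = p'.1 → p = p') ∧
      Sel.card ≤ N ∧
      W ≤ ∑ p ∈ Sel, q p.1 p.2 ∧
      v = ∑ p ∈ Sel, (β p.1 p.2 : ENNReal)} := by
  suffices H : ∀ j, j ≤ R → ∀ w, w ≤ W → ∀ n, n ≤ N → B w j n = S 𝒜 q β w j n by
    have := H R le_rfl W le_rfl N le_rfl
    rw [this, S]
    congr 1
    ext v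
    constructor
    · rintro ⟨Sel, hF, rfl⟩
      exact ⟨Sel, hF.1, hF.2.1, hF.2.2.1, hF.2.2.2, rfl⟩
    · rintro ⟨Sel, a1, a2, a3, a4, rfl⟩
      exact ⟨Sel, ⟨a1, a2, a3, a4⟩, rfl⟩
  intro j
  induction j with
  | zero =>
    intro _ w hw n hn
    rcases Nat.eq_zero_or_pos w with rfl | hwpos
    · rw [hB0, S_zero]
    · rw [hBw0 _ _ hwpos, S_top_j _ _ _ _ _ hwpos]
  | succ j ih =>
    intro hj w hw n hn
    rcases Nat.eq_zero_or_pos w with rfl | hwpos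
    · rw [hB0, S_zero]
    rcases Nat.eq_zero_or_pos n with rfl | hnpos
    · rw [hBn0 _ _ hwpos, S_top_n _ _ _ _ _ hwpos]
    rw [hrec w (j + 1) n hwpos hw (by omega) hj hnpos hn,
      S_rec _ _ _ w (j + 1) n hwpos (by omega) hnpos]
    have hskip : B w (j + 1 - 1) (min (j + 1 - 1) n) = S 𝒜 q β w (j + 1 - 1) (min (j + 1 - 1) n) := by
      simp only [Nat.add_sub_cancel]
      exact ih (by omega) w hw (min j n) (by omega)
    rw [hskip]
    congr 1
    refine Finset.inf_congr rfl fun a ha => ?_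
    simp only [Nat.add_sub_cancel]
    rw [ih (by omega) (w - q (j + 1) a) (by omega) (n - 1) (by omega)]
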